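/- For a > 0 and ε ≥ 0, the derivative with respect to ε of g(ε) = Φ(a/2 − ε/a) − e^ε·Φ(−a/2 − ε/a) equals −e^ε·Φ(−a/2 − ε/a); in particular g is differentiable and g'(ε) < 0 for all ε ≥ 0. -/

import Mathlib

open MeasureTheory Real Set Filter

/-- The standard normal CDF. -/
noncomputable def stdΦ (x : ℝ) : ℝ :=
  (Real.sqrt (2 * Real.pi))⁻¹ * ∫ t in Set.Iic x, Real.exp (-t ^ 2 / 2)

lemma gauss_integrable : Integrable (fun t : ℝ => Real.exp (-t ^ 2 / 2)) := by
  have h := integrable_exp_neg_mul_sq (by norm_num : (0:ℝ) < 1/2)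
  convert h using 2 with t
  ring_nf

lemma stdΦ_hasDerivAt (x : ℝ) :
    HasDerivAt stdΦ ((Real.sqrt (2 * Real.pi))⁻¹ * Real.exp (-x ^ 2 / 2)) x := by
  have hint := gauss_integrable
  have key : stdΦ = fun y => (Real.sqrt (2 * Real.pi))⁻¹ *
      ((∫ t in Set.Iic (0:ℝ), Real.exp (-t ^ 2 / 2)) +
        ∫ t in (0:ℝ)..y, Real.exp (-t ^ 2 / 2)) := by
    funext y
    rw [stdΦ, ← intervalIntegral.integral_Iic_sub_Iic hint.integrableOn hint.integrableOn]
    ring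
  rw [key]
  have hd : HasDerivAt (fun y => ∫ t in (0:ℝ)..y, Real.exp (-t ^ 2 / 2))
      (Real.exp (-x ^ 2 / 2)) x := by
    refine intervalIntegral.integral_hasDerivAt_right hint.intervalIntegrable
      hint.aestronglyMeasurable.stronglyMeasurableAtFilter
      (Continuous.continuousAt (by continuity))
  simpa using ((hasDerivAt_const x _).add hd).const_mul ((Real.sqrt (2 * Real.pi))⁻¹)

lemma stdΦ_pos (x : ℝ) : 0 < stdΦ x := by
  have hc : (0:ℝ) < (Real.sqrt (2 * Real.pi))⁻¹ := by
    positivity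
  refine mul_pos hc ?_
  rw [setIntegral_pos_iff_support_of_nonneg_ae ?_ gauss_integrable.integrableOn]
  · have : Function.support (fun t : ℝ => Real.exp (-t ^ 2 / 2)) = Set.univ := by
      ext t; simp [Function.mem_support, Real.exp_ne_zero]
    rw [this, Set.univ_inter]
    simp [Real.volume_Iic]
  · filter_upwards with t using (Real.exp_pos _).le

theorem stmt11 (a : ℝ) (ha : 0 < a) (ε : ℝ) (hε : 0 ≤ ε) :
    HasDerivAt (fun ε : ℝ => stdΦ (a / 2 - ε / a) - Real.exp ε * stdΦ (-(a / 2) - ε / a))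
      (-(Real.exp ε * stdΦ (-(a / 2) - ε / a))) ε ∧
    -(Real.exp ε * stdΦ (-(a / 2) - ε / a)) < 0 := by
  have ha' : a ≠ 0 := ha.ne'
  constructor
  · have h1 : HasDerivAt (fun ε : ℝ => a / 2 - ε / a) (-a⁻¹) ε := by
      simpa using ((hasDerivAt_id ε).div_const a).const_sub (a / 2)
    have h2 : HasDerivAt (fun ε : ℝ => -(a / 2) - ε / a) (-a⁻¹) ε := by
      simpa using ((hasDerivAt_id ε).div_const a).const_sub (-(a / 2))
    have hA := (stdΦ_hasDerivAt (a / 2 - ε / a)).comp ε h1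
    have hB := (stdΦ_hasDerivAt (-(a / 2) - ε / a)).comp ε h2
    have hE : HasDerivAt Real.exp (Real.exp ε) ε := Real.hasDerivAt_exp ε
    have hprod := hE.mul hB
    have := hA.sub hprod
    refine this.congr_deriv ?_
    rw [Function.comp_apply]
    have hid : Real.exp (-(a / 2 - ε / a) ^ 2 / 2) =
        Real.exp ε * Real.exp (-(-(a / 2) - ε / a) ^ 2 / 2) := by
      rw [← Real.exp_add]
      congr 1
      field_simp
      ring
    rw [hid]
    have hs : Real.sqrt (2 * Real.pi) ≠ 0 := by positivity
    field_simp
    ring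
  · have := stdΦ_pos (-(a / 2) - ε / a)
    nlinarith [Real.exp_pos ε]
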